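/- Let d ≥ 1, let ν ≥ 1/2, let 0 < ℓ ≤ (log 2)^{-1}√(ν/(2d)), let 0 < h ≤ (1 + √(8ν)ℓ)^{-1}, and let m ∈ ℕ with m ≥ 1. Then the truncation error for the Matérn kernel is bounded uniformly over x ∈ ℝ^d by | h^d Σ_{j ∈ ℤ^d, j ∉ J_m} Ĉ_{ν,ℓ}(jh) e^{2πih⟨j,x⟩} | ≤ (ν^{ν−1} d 5^{d−1} / (2^ν π^{d/2+2ν})) · (Γ(ν+d/2)/Γ(ν)) · (hℓm)^{−2ν}. -/

import Mathlib

/-- The Matérn spectral density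
`Ĉ_{ν,ℓ}(ξ) = ĉ_{d,ν} (ℓ/√(2ν))^d (2ν + |2πℓξ|²)^{−ν−d/2}` with
`ĉ_{d,ν} = 2^d π^{d/2} (2ν)^ν Γ(ν+d/2)/Γ(ν)`. -/
noncomputable def Chat (d : ℕ) (ν ℓ : ℝ) (ξ : EuclideanSpace ℝ (Fin d)) : ℝ :=
  (2 ^ d * Real.pi ^ ((d : ℝ) / 2) * (2 * ν) ^ ν *
      Real.Gamma (ν + (d : ℝ) / 2) / Real.Gamma ν) *
    (ℓ / Real.sqrt (2 * ν)) ^ d *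
      (2 * ν + (2 * Real.pi * ℓ) ^ 2 * ‖ξ‖ ^ 2) ^ (-(ν + (d : ℝ) / 2))

/-- The lattice point `c·n ∈ ℝ^d` for `n ∈ ℤ^d` and a scalar `c`. -/
noncomputable def lpt (d : ℕ) (c : ℝ) (n : Fin d → ℤ) : EuclideanSpace ℝ (Fin d) :=
  (EuclideanSpace.equiv (Fin d) ℝ).symm (fun i => c * (n i : ℝ))

/-- The cube `J_m = {−m,…,m}^d ⊂ ℤ^d`. -/
noncomputable def Jm (d m : ℕ) : Finset (Fin d → ℤ) := Finset.Icc (fun _ => -(m : ℤ)) (fun _ => (m : ℤ))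

/-! ### Auxiliary lemmas -/

open Real

lemma lpt_apply' (d : ℕ) (c : ℝ) (n : Fin d → ℤ) (i : Fin d) :
    lpt d c n i = c * (n i : ℝ) := rfl

/-- The constant prefactor of the Matérn spectral density. -/
noncomputable def C2 (d : ℕ) (ν ℓ : ℝ) : ℝ :=
  (2 ^ d * Real.pi ^ ((d : ℝ) / 2) * (2 * ν) ^ ν *
      Real.Gamma (ν + (d : ℝ) / 2) / Real.Gamma ν) * (ℓ / Real.sqrt (2 * ν)) ^ d

lemma C2_pos {d : ℕ} {ν ℓ : ℝ} (hν : 0 < ν) (hℓ : 0 < ℓ) : 0 < C2 d ν ℓ := by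
  have hG1 : 0 < Real.Gamma (ν + (d:ℝ)/2) := Real.Gamma_pos_of_pos (by positivity)
  have hG2 : 0 < Real.Gamma ν := Real.Gamma_pos_of_pos hν
  have hπ := Real.pi_pos
  have h2ν : (0:ℝ) < 2*ν := by linarith
  have hs : 0 < Real.sqrt (2*ν) := Real.sqrt_pos.2 h2ν
  have hx : (0:ℝ) < (2*ν) ^ ν := rpow_pos_of_pos h2ν _
  exact mul_pos (div_pos (mul_pos (mul_pos (mul_pos (by positivity)
    (rpow_pos_of_pos hπ _)) hx) hG1) hG2) (pow_pos (div_pos hℓ hs) d)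

lemma chat_nonneg {d : ℕ} {ν ℓ : ℝ} (hν : 0 < ν) (hℓ : 0 < ℓ)
    (ξ : EuclideanSpace ℝ (Fin d)) : 0 ≤ Chat d ν ℓ ξ := by
  have hc := C2_pos (d := d) hν hℓ
  have hdef : Chat d ν ℓ ξ
      = C2 d ν ℓ * (2*ν + (2*Real.pi*ℓ)^2 * ‖ξ‖^2) ^ (-(ν + (d:ℝ)/2)) := rfl
  rw [hdef]
  have hb : (0:ℝ) < 2*ν + (2*Real.pi*ℓ)^2 * ‖ξ‖^2 := by positivity
  positivity

lemma chat_le {d : ℕ} {ν ℓ : ℝ} (hν : 0 < ν) (hℓ : 0 < ℓ)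
    (ξ : EuclideanSpace ℝ (Fin d)) {t : ℝ} (ht : 0 < t)
    (hle : t ≤ 2 * Real.pi * ℓ * ‖ξ‖) :
    Chat d ν ℓ ξ ≤ C2 d ν ℓ * t ^ (-(2*ν + (d:ℝ))) := by
  have hbase : t^2 ≤ 2*ν + (2*Real.pi*ℓ)^2 * ‖ξ‖^2 := by
    have h1 : t^2 ≤ (2*Real.pi*ℓ*‖ξ‖)^2 := by
      apply sq_le_sq' (by nlinarith) hle
    nlinarith
  have h2 : (2*ν + (2*Real.pi*ℓ)^2 * ‖ξ‖^2) ^ (-(ν + (d:ℝ)/2)) ≤ (t^2) ^ (-(ν + (d:ℝ)/2)) :=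
    rpow_le_rpow_of_nonpos (by positivity) hbase (by
      have h0 : (0:ℝ) ≤ (d:ℝ)/2 := by positivity
      linarith)
  have h3 : (t^2 : ℝ) ^ (-(ν + (d:ℝ)/2)) = t ^ (-(2*ν + (d:ℝ))) := by
    rw [← Real.rpow_natCast t 2, ← Real.rpow_mul ht.le,
      show ((2:ℕ):ℝ) * (-(ν+(d:ℝ)/2)) = -(2*ν+(d:ℝ)) by push_cast; ring]
  have hc := C2_pos (d := d) hν hℓ
  have hdef : Chat d ν ℓ ξ
      = C2 d ν ℓ * (2*ν + (2*Real.pi*ℓ)^2 * ‖ξ‖^2) ^ (-(ν + (d:ℝ)/2)) := rfl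
  rw [hdef, ← h3]
  exact mul_le_mul_of_nonneg_left h2 hc.le

lemma mem_Jm {d k : ℕ} {j : Fin d → ℤ} : j ∈ Jm d k ↔ ∀ i, -(k:ℤ) ≤ j i ∧ j i ≤ k := by
  simp [Jm, Finset.mem_Icc, Pi.le_def, forall_and]

lemma Jm_mono {d m K : ℕ} (hmK : m ≤ K) : Jm d m ⊆ Jm d K := by
  intro j hj
  rw [mem_Jm] at hj ⊢
  intro i
  have h1 := (hj i).1
  have h2 := (hj i).2
  have : (m:ℤ) ≤ K := by exact_mod_cast hmK
  constructor <;> linarith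

lemma card_Jm {d k : ℕ} : (Jm d k).card = (2*k+1)^d := by
  rw [Jm, Pi.card_Icc]
  simp [Int.card_Icc]
  congr 1
  omega

lemma norm_coord (d : ℕ) (x : EuclideanSpace ℝ (Fin d)) (i : Fin d) : |x i| ≤ ‖x‖ := by
  rw [EuclideanSpace.norm_eq, ← Real.sqrt_sq_eq_abs]
  apply Real.sqrt_le_sqrt
  have := Finset.single_le_sum (f := fun i' => ‖x i'‖^2)
    (fun i' _ => by positivity) (Finset.mem_univ i)
  simpa using this

lemma step_ineq {p a : ℝ} (hp : 1 ≤ p) (ha : 1 ≤ a) :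
    (a+1) ^ (-(p+1)) * p ≤ a ^ (-p) - (a+1) ^ (-p) := by
  have ha0 : (0:ℝ) < a := by linarith
  have hb0 : (0:ℝ) < a + 1 := by linarith
  have key : 1 + p * (1/a) ≤ (1 + 1/a) ^ p := by
    have h0 : (0:ℝ) ≤ 1/a := by positivity
    exact one_add_mul_self_le_rpow_one_add (by linarith) hp
  have h1 : (1 + 1/a : ℝ) = (a+1)/a := by field_simp
  have h2 : ((a+1)/a) ^ p = (a+1)^p * a^(-p) := by
    rw [Real.div_rpow hb0.le ha0.le, Real.rpow_neg ha0.le, div_eq_mul_inv]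
  rw [h1, h2] at key
  have h3 : 1 + p * (1/(a+1)) ≤ (a+1)^p * a^(-p) := by
    have : p * (1/(a+1)) ≤ p * (1/a) := by
      apply mul_le_mul_of_nonneg_left _ (by linarith)
      apply one_div_le_one_div_of_le ha0 (by linarith)
    linarith
  have hbnp : (0:ℝ) < (a+1)^(-p) := rpow_pos_of_pos hb0 _
  have h4 := mul_le_mul_of_nonneg_left h3 hbnp.le
  have h5 : (a+1)^(-p) * ((a+1)^p * a^(-p)) = a^(-p) := by
    rw [← mul_assoc, ← Real.rpow_add hb0]
    simp
  rw [h5, mul_add, mul_one] at h4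
  have h6 : (a+1)^(-p) * (p * (1/(a+1))) = (a+1)^(-(p+1)) * p := by
    rw [show -(p+1) = -p + (-1) by ring, Real.rpow_add hb0, Real.rpow_neg_one]
    ring
  rw [h6] at h4
  linarith

lemma pow_diff_le' {a b : ℝ} (hb : 0 ≤ b) (hab : b ≤ a) (n : ℕ) :
    a^(n+1) - b^(n+1) ≤ (n+1) * (a - b) * a^n := by
  induction n with
  | zero => simp
  | succ n ih =>
    have hbn : b^(n+1) ≤ a^(n+1) := pow_le_pow_left₀ hb hab _
    have han : (0:ℝ) ≤ a := le_trans hb hab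
    have heq : a^(n+1+1) - b^(n+1+1) = a * (a^(n+1) - b^(n+1)) + (a-b) * b^(n+1) := by ring
    rw [heq]
    have h1 : a * (a^(n+1) - b^(n+1)) ≤ a * ((n+1) * (a-b) * a^n) :=
      mul_le_mul_of_nonneg_left ih han
    have h2 : (a-b) * b^(n+1) ≤ (a-b) * a^(n+1) :=
      mul_le_mul_of_nonneg_left hbn (by linarith)
    have h3 : a * (((n:ℝ)+1) * (a-b) * a^n) + (a-b)*a^(n+1) = ((n:ℝ)+1+1)*(a-b)*a^(n+1) := by
      ring
    push_cast
    linarith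

lemma shell_bound (d : ℕ) (hd : 1 ≤ d) (ν ℓ h : ℝ) (hν : 1/2 ≤ ν) (hℓ0 : 0 < ℓ)
    (hh0 : 0 < h) (n : ℕ) :
    ∑ j ∈ Jm d (n+1) \ Jm d n, Chat d ν ℓ (lpt d h j)
      ≤ 2*d*(3:ℝ)^(d-1) * C2 d ν ℓ * (2*Real.pi*ℓ*h)^(-(2*ν+(d:ℝ)))
          * ((n:ℝ)+1)^(-(2*ν+1)) := by
  have hν0 : (0:ℝ) < ν := by linarith
  have hπ := Real.pi_pos
  have ha0 : (0:ℝ) < 2*Real.pi*ℓ*h := by positivity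
  have hn1 : (0:ℝ) < (n:ℝ)+1 := by positivity
  have hc2 := C2_pos (d := d) hν0 hℓ0
  set a := 2*Real.pi*ℓ*h with ha
  set E := -(2*ν+(d:ℝ)) with hE
  have helem : ∀ j ∈ Jm d (n+1) \ Jm d n,
      Chat d ν ℓ (lpt d h j) ≤ C2 d ν ℓ * (a*((n:ℝ)+1))^E := by
    intro j hj
    rw [Finset.mem_sdiff] at hj
    obtain ⟨hj1, hj2⟩ := hj
    rw [mem_Jm] at hj2
    push_neg at hj2
    obtain ⟨i, hi⟩ := hj2
    have habs : (n:ℤ)+1 ≤ |j i| := by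
      rcases le_or_gt (-(n:ℤ)) (j i) with hc | hc
      · have := hi hc
        rw [abs_of_pos (by omega)]
        omega
      · rw [abs_of_neg (by omega)]
        omega
    have hnorm : h*((n:ℝ)+1) ≤ ‖lpt d h j‖ := by
      have h1 : |lpt d h j i| ≤ ‖lpt d h j‖ := norm_coord d _ i
      have h2 : |lpt d h j i| = h * |(j i : ℝ)| := by
        rw [lpt_apply', abs_mul, abs_of_pos hh0]
      have h3 : ((n:ℝ)+1) ≤ |(j i : ℝ)| := by
        have : ((n:ℤ)+1 : ℝ) ≤ (|j i| : ℝ) := by exact_mod_cast habs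
        rw [← Int.cast_abs]
        push_cast at this ⊢
        linarith
      nlinarith
    apply chat_le hν0 hℓ0 _ (by positivity)
    calc a*((n:ℝ)+1) = 2*Real.pi*ℓ*(h*((n:ℝ)+1)) := by rw [ha]; ring
      _ ≤ 2*Real.pi*ℓ*‖lpt d h j‖ := by
          apply mul_le_mul_of_nonneg_left hnorm (by positivity)
  have hsum := Finset.sum_le_card_nsmul _ _ _ helem
  rw [nsmul_eq_mul] at hsum
  obtain ⟨e, he⟩ : ∃ e, d = e + 1 := ⟨d-1, by omega⟩
  have hcard : ((Jm d (n+1) \ Jm d n).card : ℝ) ≤ 2*d*(3:ℝ)^(d-1)*((n:ℝ)+1)^(d-1) := by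
    have hsub : Jm d n ⊆ Jm d (n+1) := Jm_mono (Nat.le_succ n)
    rw [Finset.card_sdiff_of_subset hsub, card_Jm, card_Jm]
    have hle : (2*n+1)^d ≤ (2*(n+1)+1)^d := Nat.pow_le_pow_left (by omega) d
    rw [Nat.cast_sub hle]
    push_cast
    have key := pow_diff_le' (a := 2*(n:ℝ)+3) (b := 2*(n:ℝ)+1) (by positivity) (by linarith) e
    have h2 : ((e:ℝ)+1) * ((2*(n:ℝ)+3) - (2*(n:ℝ)+1)) * (2*(n:ℝ)+3)^e
        ≤ (d:ℝ) * 2 * (3*((n:ℝ)+1))^e := by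
      have h3 : (2*(n:ℝ)+3)^e ≤ (3*((n:ℝ)+1))^e := by
        apply pow_le_pow_left₀ (by positivity) (by linarith)
      have h4 : ((e:ℝ)+1) = (d:ℝ) := by rw [he]; push_cast; ring
      rw [h4]
      have : (0:ℝ) ≤ (d:ℝ) := by positivity
      nlinarith
    have h5 : (3*((n:ℝ)+1))^e = (3:ℝ)^e * ((n:ℝ)+1)^e := by rw [mul_pow]
    have h6 : e = d - 1 := by omega
    subst h6
    rw [h5] at h2
    rw [show (2*((n:ℝ)+1)+1) = 2*(n:ℝ)+3 by ring]
    calc (2*(n:ℝ)+3)^d - (2*(n:ℝ)+1)^d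
        = (2*(n:ℝ)+3)^(d-1+1) - (2*(n:ℝ)+1)^(d-1+1) := by rw [← he]
      _ ≤ (d:ℝ)*2*((3:ℝ)^(d-1)*((n:ℝ)+1)^(d-1)) := le_trans key h2
      _ = 2*(d:ℝ)*(3:ℝ)^(d-1)*((n:ℝ)+1)^(d-1) := by ring
  have hb0 : (0:ℝ) ≤ C2 d ν ℓ * (a*((n:ℝ)+1))^E := by positivity
  calc ∑ j ∈ Jm d (n+1) \ Jm d n, Chat d ν ℓ (lpt d h j)
      ≤ ((Jm d (n+1) \ Jm d n).card : ℝ) * (C2 d ν ℓ * (a*((n:ℝ)+1))^E) := hsum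
    _ ≤ (2*d*(3:ℝ)^(d-1)*((n:ℝ)+1)^(d-1)) * (C2 d ν ℓ * (a*((n:ℝ)+1))^E) :=
        mul_le_mul_of_nonneg_right hcard hb0
    _ = 2*d*(3:ℝ)^(d-1) * C2 d ν ℓ * (a^E * (((n:ℝ)+1)^(d-1) * ((n:ℝ)+1)^E)) := by
        rw [Real.mul_rpow ha0.le hn1.le]; ring
    _ = _ := by
        rw [← Real.rpow_natCast ((n:ℝ)+1) (d-1), ← Real.rpow_add hn1,
          show ((d-1:ℕ):ℝ) + E = -(2*ν+1) by
            rw [hE, Nat.cast_sub hd]; push_cast; ring]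
        ring

lemma tail_bound (d : ℕ) (hd : 1 ≤ d) (ν ℓ h : ℝ) (hν : 1/2 ≤ ν) (hℓ0 : 0 < ℓ)
    (hh0 : 0 < h) (m : ℕ) (hm : 1 ≤ m) (K : ℕ) :
    ∑ j ∈ Jm d (m+K) \ Jm d m, Chat d ν ℓ (lpt d h j)
      ≤ 2*d*(3:ℝ)^(d-1) * C2 d ν ℓ * (2*Real.pi*ℓ*h)^(-(2*ν+(d:ℝ)))
          * (((m:ℝ))^(-(2*ν)) - ((m:ℝ)+(K:ℝ))^(-(2*ν))) / (2*ν) := by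
  have hν0 : (0:ℝ) < ν := by linarith
  have hπ := Real.pi_pos
  have ha0 : (0:ℝ) < 2*Real.pi*ℓ*h := by positivity
  have hc2 := C2_pos (d := d) hν0 hℓ0
  set B := 2*(d:ℝ)*(3:ℝ)^(d-1) * C2 d ν ℓ * (2*Real.pi*ℓ*h)^(-(2*ν+(d:ℝ))) with hB
  have hB0 : (0:ℝ) ≤ B := by positivity
  induction K with
  | zero =>
    simp only [Nat.add_zero, Finset.sdiff_self, Finset.sum_empty, Nat.cast_zero, add_zero,
      sub_self]
    simp
  | succ K ih =>
    have hsub1 : Jm d m ⊆ Jm d (m+K) := Jm_mono (by omega)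
    have hsub2 : Jm d (m+K) ⊆ Jm d (m+K+1) := Jm_mono (by omega)
    have hsub3 : Jm d m ⊆ Jm d (m+K+1) := Jm_mono (by omega)
    have hsplit : ∑ j ∈ Jm d (m+(K+1)) \ Jm d m, Chat d ν ℓ (lpt d h j)
        = (∑ j ∈ Jm d (m+K) \ Jm d m, Chat d ν ℓ (lpt d h j))
          + ∑ j ∈ Jm d ((m+K)+1) \ Jm d (m+K), Chat d ν ℓ (lpt d h j) := by
      rw [show m+(K+1) = (m+K)+1 by ring]
      rw [Finset.sum_sdiff_eq_sub hsub1, Finset.sum_sdiff_eq_sub hsub2,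
        Finset.sum_sdiff_eq_sub (by rw [show (m+K)+1 = m+K+1 by ring]; exact hsub3)]
      ring
    rw [hsplit]
    have hshell := shell_bound d hd ν ℓ h hν hℓ0 hh0 (m+K)
    have hstep : (((m:ℝ)+(K:ℝ))+1) ^ (-(2*ν+1)) * (2*ν)
        ≤ ((m:ℝ)+(K:ℝ)) ^ (-(2*ν)) - (((m:ℝ)+(K:ℝ))+1) ^ (-(2*ν)) := by
      have := step_ineq (p := 2*ν) (a := (m:ℝ)+(K:ℝ)) (by linarith)
        (by
          have : (1:ℝ) ≤ (m:ℝ) := by exact_mod_cast hm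
          have : (0:ℝ) ≤ (K:ℝ) := by positivity
          linarith)
      convert this using 3 <;> ring
    have hshell2 : ∑ j ∈ Jm d ((m+K)+1) \ Jm d (m+K), Chat d ν ℓ (lpt d h j)
        ≤ B * (((m:ℝ)+(K:ℝ)) ^ (-(2*ν)) - (((m:ℝ)+(K:ℝ))+1) ^ (-(2*ν))) / (2*ν) := by
      have h1 : ((m+K:ℕ):ℝ)+1 = ((m:ℝ)+(K:ℝ))+1 := by push_cast; ring
      rw [h1, ← hB] at hshell
      have h2 : B * ((((m:ℝ)+(K:ℝ))+1) ^ (-(2*ν+1)))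
          ≤ B * (((m:ℝ)+(K:ℝ)) ^ (-(2*ν)) - (((m:ℝ)+(K:ℝ))+1) ^ (-(2*ν))) / (2*ν) := by
        rw [le_div_iff₀ (by linarith : (0:ℝ) < 2*ν)]
        calc B * ((((m:ℝ)+(K:ℝ))+1) ^ (-(2*ν+1))) * (2*ν)
            = B * ((((m:ℝ)+(K:ℝ))+1) ^ (-(2*ν+1)) * (2*ν)) := by ring
          _ ≤ B * (((m:ℝ)+(K:ℝ)) ^ (-(2*ν)) - (((m:ℝ)+(K:ℝ))+1) ^ (-(2*ν))) :=
              mul_le_mul_of_nonneg_left hstep hB0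
      exact le_trans hshell h2
    have hfinal : B * (((m:ℝ))^(-(2*ν)) - ((m:ℝ)+(K:ℝ))^(-(2*ν))) / (2*ν)
        + B * (((m:ℝ)+(K:ℝ)) ^ (-(2*ν)) - (((m:ℝ)+(K:ℝ))+1) ^ (-(2*ν))) / (2*ν)
        = B * (((m:ℝ))^(-(2*ν)) - ((m:ℝ)+((K:ℕ)+1:ℝ))^(-(2*ν))) / (2*ν) := by
      rw [show (m:ℝ)+((K:ℕ)+1:ℝ) = ((m:ℝ)+(K:ℝ))+1 by push_cast; ring]
      ring
    push_cast at hfinal ⊢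
    linarith [ih]

lemma final_const (d : ℕ) (hd : 1 ≤ d) (ν ℓ h M G1 G2 D : ℝ) (hν : 1/2 ≤ ν)
    (hℓ0 : 0 < ℓ) (hh0 : 0 < h) (hM : 0 < M) (hG1 : 0 < G1) (hG2 : 0 < G2) (hD : 1 ≤ D) :
    h^d * (2*D*(3:ℝ)^(d-1) * ((2^d * Real.pi^((d:ℝ)/2) * (2*ν)^ν * G1 / G2)
        * (ℓ/Real.sqrt (2*ν))^d) * (2*Real.pi*ℓ*h)^(-(2*ν+(d:ℝ))) * M^(-(2*ν)) / (2*ν))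
      ≤ ν^(ν-1) * D * 5^(d-1) / (2^ν * Real.pi^((d:ℝ)/2 + 2*ν)) * (G1/G2)
          * (h*ℓ*M)^(-(2*ν)) := by
  have hν0 : (0:ℝ) < ν := by linarith
  obtain ⟨uν, rfl⟩ : ∃ u, ν = Real.exp u := ⟨Real.log ν, (Real.exp_log hν0).symm⟩
  obtain ⟨uℓ, rfl⟩ : ∃ u, ℓ = Real.exp u := ⟨Real.log ℓ, (Real.exp_log hℓ0).symm⟩
  obtain ⟨uh, rfl⟩ : ∃ u, h = Real.exp u := ⟨Real.log h, (Real.exp_log hh0).symm⟩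
  obtain ⟨uM, rfl⟩ : ∃ u, M = Real.exp u := ⟨Real.log M, (Real.exp_log hM).symm⟩
  obtain ⟨g1, rfl⟩ : ∃ u, G1 = Real.exp u := ⟨Real.log G1, (Real.exp_log hG1).symm⟩
  obtain ⟨g2, rfl⟩ : ∃ u, G2 = Real.exp u := ⟨Real.log G2, (Real.exp_log hG2).symm⟩
  obtain ⟨uD, rfl⟩ : ∃ u, D = Real.exp u := ⟨Real.log D, (Real.exp_log (by linarith)).symm⟩
  have hπ := Real.pi_pos
  rw [← Real.log_le_log_iff (by positivity) (by positivity)]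
  have hd1 : ((d-1:ℕ):ℝ) = (d:ℝ) - 1 := by
    have := Nat.cast_sub (R := ℝ) hd
    simpa using this
  simp (disch := positivity) only [Real.log_mul, Real.log_div, Real.log_pow,
    Real.log_rpow, Real.log_inv, Real.log_sqrt, Real.log_exp, Real.log_one]
  rw [hd1]
  have h35 : Real.log 3 ≤ Real.log 5 := Real.log_le_log (by norm_num) (by norm_num)
  have h2 : (0:ℝ) ≤ Real.log 2 := Real.log_nonneg (by norm_num)
  have hνlog : -Real.log 2 ≤ uν := by
    have h1 : Real.log (1/2) ≤ Real.log (Real.exp uν) :=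
      Real.log_le_log (by norm_num) hν
    rw [Real.log_exp] at h1
    rw [show (1:ℝ)/2 = 2⁻¹ by norm_num, Real.log_inv] at h1
    linarith
  have hd0 : (1:ℝ) ≤ (d:ℝ) := by exact_mod_cast hd
  nlinarith [mul_nonneg (sub_nonneg.2 hd0) (sub_nonneg.2 h35),
    mul_nonneg (by linarith : (0:ℝ) ≤ (d:ℝ)) (by linarith : (0:ℝ) ≤ Real.log 2 + uν)]

theorem stmt_4 (d : ℕ) (hd : 1 ≤ d) (ν : ℝ) (hν : 1 / 2 ≤ ν) (ℓ : ℝ) (hℓ0 : 0 < ℓ)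
    (hℓ : ℓ ≤ (Real.log 2)⁻¹ * Real.sqrt (ν / (2 * d))) (h : ℝ) (hh0 : 0 < h)
    (hh : h ≤ (1 + Real.sqrt (8 * ν) * ℓ)⁻¹) (m : ℕ) (hm : 1 ≤ m)
    (x : EuclideanSpace ℝ (Fin d)) :
    ‖(h : ℂ) ^ d * ∑' j : {j : Fin d → ℤ // j ∉ Jm d m},
        (Chat d ν ℓ (lpt d h j.1) : ℂ) *
          Complex.exp (2 * (Real.pi : ℂ) * Complex.I * (h : ℂ) *
            ((∑ i, (j.1 i : ℝ) * x i : ℝ) : ℂ))‖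
      ≤ ν ^ (ν - 1) * d * 5 ^ (d - 1) / (2 ^ ν * Real.pi ^ ((d : ℝ) / 2 + 2 * ν)) *
          (Real.Gamma (ν + (d : ℝ) / 2) / Real.Gamma ν) * (h * ℓ * m) ^ (-(2 * ν)) := by
  have hν0 : (0:ℝ) < ν := by linarith
  have hπ := Real.pi_pos
  have hc2 := C2_pos (d := d) hν0 hℓ0
  set f : {j : Fin d → ℤ // j ∉ Jm d m} → ℂ := fun j =>
    (Chat d ν ℓ (lpt d h j.1) : ℂ) *
      Complex.exp (2 * (Real.pi : ℂ) * Complex.I * (h : ℂ) *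
        ((∑ i, (j.1 i : ℝ) * x i : ℝ) : ℂ)) with hf
  set B := 2*(d:ℝ)*(3:ℝ)^(d-1) * C2 d ν ℓ * (2*Real.pi*ℓ*h)^(-(2*ν+(d:ℝ))) with hB
  have hB0 : (0:ℝ) ≤ B := by positivity
  set C := B * ((m:ℝ))^(-(2*ν)) / (2*ν) with hC
  -- norm of each term equals Chat
  have hnorm : ∀ j, ‖f j‖ = Chat d ν ℓ (lpt d h j.1) := by
    intro j
    rw [hf]
    simp only [norm_mul, Complex.norm_real, Real.norm_eq_abs]
    have he : ‖Complex.exp (2 * (Real.pi : ℂ) * Complex.I * (h : ℂ) *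
        ((∑ i, (j.1 i : ℝ) * x i : ℝ) : ℂ))‖ = 1 := by
      rw [Complex.norm_exp]
      have : (2 * (Real.pi : ℂ) * Complex.I * (h : ℂ) *
          ((∑ i, (j.1 i : ℝ) * x i : ℝ) : ℂ)).re = 0 := by
        simp [Complex.mul_re, Complex.mul_im]
      rw [this, Real.exp_zero]
    rw [he, mul_one, abs_of_nonneg (chat_nonneg hν0 hℓ0 _)]
  -- all finite partial sums of Chat are bounded by C
  have hfin : ∀ u : Finset {j : Fin d → ℤ // j ∉ Jm d m},
      ∑ j ∈ u, Chat d ν ℓ (lpt d h j.1) ≤ C := by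
    intro u
    classical
    set F : Finset (Fin d → ℤ) := u.image (fun j => j.1) with hF
    have himg : ∑ j ∈ u, Chat d ν ℓ (lpt d h j.1) = ∑ j ∈ F, Chat d ν ℓ (lpt d h j) := by
      rw [hF, Finset.sum_image]
      intro a _ b _ hab
      exact Subtype.ext hab
    rw [himg]
    set K := F.sup (fun j => Finset.univ.sup fun i => (j i).natAbs) with hK
    clear_value K
    have hFsub : F ⊆ Jm d (m+K) \ Jm d m := by
      intro j hj
      rw [Finset.mem_sdiff]
      constructor
      · rw [mem_Jm]
        intro i
        have h1 : (j i).natAbs ≤ K := by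
          calc (j i).natAbs ≤ Finset.univ.sup fun i' => (j i').natAbs :=
                Finset.le_sup (f := fun i' => (j i').natAbs) (Finset.mem_univ i)
            _ ≤ K := by
                rw [hK]
                exact Finset.le_sup (f := fun j' => Finset.univ.sup fun i' => (j' i').natAbs) hj
        have h2 : |j i| ≤ (K:ℤ) := by
          rw [Int.abs_eq_natAbs]
          exact_mod_cast h1
        have h3 := abs_le.1 h2
        have h4 := h3.1
        have h5 := h3.2
        have h6 : ((m+K:ℕ):ℤ) = (m:ℤ) + (K:ℤ) := by push_cast; ring
        have h7 : (0:ℤ) ≤ (m:ℤ) := by positivity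
        constructor
        · rw [h6]; linarith
        · rw [h6]; linarith
      · rw [hF] at hj
        obtain ⟨a, _, rfl⟩ := Finset.mem_image.1 hj
        exact a.2
    calc ∑ j ∈ F, Chat d ν ℓ (lpt d h j)
        ≤ ∑ j ∈ Jm d (m+K) \ Jm d m, Chat d ν ℓ (lpt d h j) :=
          Finset.sum_le_sum_of_subset_of_nonneg hFsub
            (fun j _ _ => chat_nonneg hν0 hℓ0 _)
      _ ≤ B * (((m:ℝ))^(-(2*ν)) - ((m:ℝ)+(K:ℝ))^(-(2*ν))) / (2*ν) :=
          tail_bound d hd ν ℓ h hν hℓ0 hh0 m hm K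
      _ ≤ C := by
          rw [hC]
          have hmK : (0:ℝ) < (m:ℝ)+(K:ℝ) := by
            have : (1:ℝ) ≤ (m:ℝ) := by exact_mod_cast hm
            positivity
          have hpos : (0:ℝ) ≤ ((m:ℝ)+(K:ℝ))^(-(2*ν)) := (rpow_pos_of_pos hmK _).le
          apply div_le_div_of_nonneg_right _ (by linarith)
          nlinarith
  -- summability
  have hsumm : Summable (fun j : {j : Fin d → ℤ // j ∉ Jm d m} =>
      Chat d ν ℓ (lpt d h j.1)) :=
    summable_of_sum_le (fun j => chat_nonneg hν0 hℓ0 _) hfin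
  have hsummnorm : Summable (fun j => ‖f j‖) := by
    simpa only [hnorm] using hsumm
  have htsum : ∑' j, ‖f j‖ ≤ C := by
    rw [tsum_congr hnorm]
    exact hsumm.tsum_le_of_sum_le hfin
  have hnormtsum : ‖∑' j, f j‖ ≤ C := le_trans (norm_tsum_le_tsum_norm hsummnorm) htsum
  -- assemble
  have hlhs : ‖(h : ℂ) ^ d * ∑' j, f j‖ ≤ h^d * C := by
    rw [norm_mul, norm_pow, Complex.norm_real, Real.norm_eq_abs, abs_of_pos hh0]
    exact mul_le_mul_of_nonneg_left hnormtsum (by positivity)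
  refine le_trans hlhs ?_
  have hG1 : 0 < Real.Gamma (ν + (d:ℝ)/2) := Real.Gamma_pos_of_pos (by positivity)
  have hG2 : 0 < Real.Gamma ν := Real.Gamma_pos_of_pos hν0
  have hM : (0:ℝ) < (m:ℝ) := by exact_mod_cast hm
  have hD : (1:ℝ) ≤ (d:ℝ) := by exact_mod_cast hd
  have := final_const d hd ν ℓ h (m:ℝ) (Real.Gamma (ν + (d:ℝ)/2)) (Real.Gamma ν) (d:ℝ)
    hν hℓ0 hh0 hM hG1 hG2 hD
  calc h^d * C = h^d * (2*(d:ℝ)*(3:ℝ)^(d-1) * ((2^d * Real.pi^((d:ℝ)/2) * (2*ν)^ν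
          * Real.Gamma (ν + (d:ℝ)/2) / Real.Gamma ν) * (ℓ/Real.sqrt (2*ν))^d)
          * (2*Real.pi*ℓ*h)^(-(2*ν+(d:ℝ))) * ((m:ℝ))^(-(2*ν)) / (2*ν)) := by
        rw [hC, hB, C2]
    _ ≤ _ := this
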